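/- Let $A^1,\dots,A^N$ solve the second-order Lohe matrix model $m(\ddot A^i (A^i)^T + \dot A^i(\dot A^i)^T) = -\gamma \dot A^i (A^i)^T + \frac{\kappa}{2N}\sum_{j=1}^N (A^j (A^i)^T - A^i (A^j)^T)$ with $m,\gamma,\kappa>0$ and initial data satisfying $A^i(0)(A^i(0))^T = I_d$ and $\dot A^i(0)(A^i(0))^T + A^i(0)(\dot A^i(0))^T = 0$. Then $A^i(t)(A^i(t))^T = I_d$ for all $t \geq 0$ and all $i$, i.e., the orthogonality constraint is preserved along the flow. -/

import Mathlib

open scoped BigOperators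
open Matrix

attribute [local instance] Matrix.frobeniusNormedAddCommGroup Matrix.frobeniusNormedSpace

attribute [local instance] Matrix.frobeniusNormedRing Matrix.frobeniusNormedAlgebra

/-- Transpose as a continuous linear map on square matrices. -/
noncomputable def transposeCLM (d : ℕ) :
    Matrix (Fin d) (Fin d) ℝ →L[ℝ] Matrix (Fin d) (Fin d) ℝ :=
  LinearMap.toContinuousLinearMap (Matrix.transposeLinearEquiv (Fin d) (Fin d) ℝ ℝ).toLinearMap

theorem hasDerivAt_transpose {d : ℕ} {f : ℝ → Matrix (Fin d) (Fin d) ℝ}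
    {f' : Matrix (Fin d) (Fin d) ℝ} {x : ℝ} (hf : HasDerivAt f f' x) :
    HasDerivAt (fun y => (f y)ᵀ) f'ᵀ x := by
  have := ((transposeCLM d).hasFDerivAt (x := f x)).comp_hasDerivAt x hf
  exact this

/-- the orthogonality constraint `Aⁱ(Aⁱ)ᵀ = I` is preserved along
the second-order Lohe matrix flow. -/
theorem stmt5 (d N : ℕ) (A : Fin N → ℝ → Matrix (Fin d) (Fin d) ℝ)
    (m γ κ : ℝ) (hm : 0 < m) (hγ : 0 < γ) (hκ : 0 < κ)
    (hsmooth : ∀ i, ContDiff ℝ 2 (A i))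
    (hODE : ∀ i, ∀ t : ℝ, 0 ≤ t →
      m • (deriv (deriv (A i)) t * (A i t)ᵀ + deriv (A i) t * (deriv (A i) t)ᵀ) =
        -γ • (deriv (A i) t * (A i t)ᵀ) +
          (κ / (2 * N)) • ∑ j : Fin N, (A j t * (A i t)ᵀ - A i t * (A j t)ᵀ))
    (hinit1 : ∀ i, A i 0 * (A i 0)ᵀ = 1)
    (hinit2 : ∀ i, deriv (A i) 0 * (A i 0)ᵀ + A i 0 * (deriv (A i) 0)ᵀ = 0) :
    ∀ i, ∀ t : ℝ, 0 ≤ t → A i t * (A i t)ᵀ = 1 := by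
  intro i t ht
  set f : ℝ → Matrix (Fin d) (Fin d) ℝ := A i with hfdef
  have hdiff : Differentiable ℝ f := (hsmooth i).differentiable two_ne_zero
  have hC1 : ContDiff ℝ 1 (deriv f) := by
    have h2 : ContDiff ℝ ((1 : ℕ) + 1) f := by
      exact_mod_cast (hsmooth i)
    exact (contDiff_succ_iff_deriv.1 h2).2.2
  have hdiff' : Differentiable ℝ (deriv f) := hC1.differentiable one_ne_zero
  set F1 : ℝ → Matrix (Fin d) (Fin d) ℝ := deriv f with hF1
  set F2 : ℝ → Matrix (Fin d) (Fin d) ℝ := deriv (deriv f) with hF2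
  have h1 : ∀ s : ℝ, HasDerivAt f (F1 s) s := fun s => (hdiff s).hasDerivAt
  have h2 : ∀ s : ℝ, HasDerivAt F1 (F2 s) s := fun s => (hdiff' s).hasDerivAt
  -- Y = derivative of f * fᵀ
  set Y : ℝ → Matrix (Fin d) (Fin d) ℝ := fun s => F1 s * (f s)ᵀ + f s * (F1 s)ᵀ with hYdef
  have hY : ∀ s : ℝ, HasDerivAt (fun u => f u * (f u)ᵀ) (Y s) s := fun s =>
    (h1 s).mul (hasDerivAt_transpose (h1 s))
  have hYder : ∀ s : ℝ, HasDerivAt Y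
      (F2 s * (f s)ᵀ + F1 s * (F1 s)ᵀ + (F1 s * (F1 s)ᵀ + f s * (F2 s)ᵀ)) s := fun s =>
    ((h2 s).mul (hasDerivAt_transpose (h1 s))).add ((h1 s).mul (hasDerivAt_transpose (h2 s)))
  -- from the ODE: m • Y' = -γ • Y on [0, ∞)
  have key : ∀ s : ℝ, 0 ≤ s →
      F2 s * (f s)ᵀ + F1 s * (F1 s)ᵀ + (F1 s * (F1 s)ᵀ + f s * (F2 s)ᵀ) = (-(γ/m)) • Y s := by
    intro s hs
    have hode := hODE i s hs
    set S : Matrix (Fin d) (Fin d) ℝ := ∑ j : Fin N, (A j s * (f s)ᵀ - f s * (A j s)ᵀ) with hSdef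
    have hSant : Sᵀ = -S := by
      simp [hSdef, Matrix.transpose_sum, Matrix.transpose_sub, Matrix.transpose_mul,
        ← Finset.sum_neg_distrib, neg_sub]
    -- transpose of the ODE
    have hodeT : m • (f s * (F2 s)ᵀ + F1 s * (F1 s)ᵀ) =
        -γ • (f s * (F1 s)ᵀ) - (κ / (2 * N)) • S := by
      have := congrArg Matrix.transpose hode
      simp only [Matrix.transpose_smul, Matrix.transpose_add, Matrix.transpose_mul,
        Matrix.transpose_transpose, Matrix.transpose_neg, hSant] at this
      rw [this]; module
    have hsum : m • (F2 s * (f s)ᵀ + F1 s * (F1 s)ᵀ + (F1 s * (F1 s)ᵀ + f s * (F2 s)ᵀ)) =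
        -γ • Y s := by
      have := congrArg₂ (· + ·) hode hodeT
      simp only [smul_add] at this ⊢
      rw [hYdef]
      simp only [smul_add] at this ⊢
      have h' : m • (F2 s * (f s)ᵀ) + m • (F1 s * (F1 s)ᵀ) +
          (m • (f s * (F2 s)ᵀ) + m • (F1 s * (F1 s)ᵀ)) =
          (-γ • (F1 s * (f s)ᵀ) + (κ / (2 * N)) • S) +
            (-γ • (f s * (F1 s)ᵀ) - (κ / (2 * N)) • S) := by
        rw [← smul_add, ← smul_add, hode, hodeT]
      rw [show m • (F2 s * (f s)ᵀ) + m • (F1 s * (F1 s)ᵀ) +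
          (m • (F1 s * (F1 s)ᵀ) + m • (f s * (F2 s)ᵀ)) =
          m • (F2 s * (f s)ᵀ) + m • (F1 s * (F1 s)ᵀ) +
          (m • (f s * (F2 s)ᵀ) + m • (F1 s * (F1 s)ᵀ)) from by abel, h']
      module
    have hm' : m ≠ 0 := ne_of_gt hm
    have := congrArg (fun X => (m⁻¹ : ℝ) • X) hsum
    simpa [smul_smul, inv_mul_cancel₀ hm', neg_div, div_eq_inv_mul] using this
  -- Z = exp((γ/m) s) • Y s has zero derivative on [0, ∞)
  set c : ℝ := γ / m with hcdef
  set Z : ℝ → Matrix (Fin d) (Fin d) ℝ := fun s => Real.exp (c * s) • Y s with hZdef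
  have hexp : ∀ s : ℝ, HasDerivAt (fun u => Real.exp (c * u)) (c * Real.exp (c * s)) s := by
    intro s
    have hlin : HasDerivAt (fun u : ℝ => c * u) c s := by
      simpa using (hasDerivAt_id s).const_mul c
    simpa [mul_comm] using hlin.exp
  have hZder : ∀ s : ℝ, 0 ≤ s → HasDerivAt Z 0 s := by
    intro s hs
    have := (hexp s).smul (hYder s)
    rw [key s hs] at this
    simp [hZdef, smul_smul, mul_comm, mul_left_comm, hcdef, Pi.smul_def'] at this ⊢
    exact this
  have hZ0 : Z 0 = 0 := by
    simp [hZdef, hYdef, hF1, ← hfdef, hinit2 i]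
    exact hinit2 i
  -- Z is constant on [0, t], hence Y vanishes on [0, t]
  have hZcont : ContinuousOn Z (Set.Icc 0 t) := by
    have : Continuous Z := by
      have hYc : Continuous Y := by
        have : Differentiable ℝ Y := fun s => (hYder s).differentiableAt
        exact this.continuous
      exact ((Real.continuous_exp.comp (continuous_const.mul continuous_id)).smul hYc)
    exact this.continuousOn
  have hZeq : ∀ x ∈ Set.Icc (0:ℝ) t, Z x = Z 0 :=
    constant_of_has_deriv_right_zero hZcont fun x hx =>
      ((hZder x hx.1).hasDerivWithinAt)
  have hYzero : ∀ x ∈ Set.Icc (0:ℝ) t, Y x = 0 := by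
    intro x hx
    have := (hZeq x hx).trans hZ0
    simpa [hZdef, Real.exp_ne_zero] using this
  -- hence f * fᵀ is constant on [0, t]
  have hgcont : ContinuousOn (fun u => f u * (f u)ᵀ) (Set.Icc 0 t) := by
    have hc : Continuous (fun u => f u * (f u)ᵀ) :=
      Continuous.mul hdiff.continuous ((transposeCLM d).continuous.comp hdiff.continuous)
    exact hc.continuousOn
  have hgeq : ∀ x ∈ Set.Icc (0:ℝ) t, f x * (f x)ᵀ = f 0 * (f 0)ᵀ :=
    constant_of_has_deriv_right_zero hgcont fun x hx => by
      have := (hY x).hasDerivWithinAt (s := Set.Ici x)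
      rwa [hYzero x ⟨hx.1, hx.2.le⟩] at this
  have := hgeq t ⟨ht, le_rfl⟩
  rw [this]
  exact hinit1 i
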